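/- Let k be a field of characteristic zero, A a k-algebra, and s ∈ A a regular element (not a zero divisor on either side) such that sA = As, A is complete and separated for the s-adic topology (A ≅ lim A/As^n), and A/As is left Noetherian. Then A is left Noetherian. -/
import Mathlib

section Aux

variable {A : Type*} [Ring A]

private lemma exists_sgEquiv (s : A)
    (hsA : ∀ a : A, ∃ b : A, s * a = b * s)
    (hregr : ∀ a : A, a * s = 0 → a = 0)
    (hregl : ∀ a : A, s * a = 0 → a = 0)
    (hAs : ∀ a : A, ∃ b : A, a * s = s * b) :
    ∃ e : A ≃+* A, ∀ a, s * a = e a * s := by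
  classical
  set f : A → A := fun a => (hsA a).choose with hf
  have hspec : ∀ a, s * a = f a * s := fun a => (hsA a).choose_spec
  have huniq : ∀ a b : A, s * a = b * s → f a = b := by
    intro a b h
    have h2 : (f a - b) * s = 0 := by rw [sub_mul, ← hspec, h, sub_self]
    exact sub_eq_zero.mp (hregr _ h2)
  have hmul : ∀ a b : A, f (a * b) = f a * f b := fun a b =>
    huniq _ _ (by rw [← mul_assoc, hspec a, mul_assoc, hspec b, ← mul_assoc])
  have hadd : ∀ a b : A, f (a + b) = f a + f b := fun a b =>
    huniq _ _ (by rw [mul_add, hspec a, hspec b, add_mul])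
  have hone : f 1 = 1 := huniq _ _ (by rw [mul_one, one_mul])
  have hzero : f 0 = 0 := huniq _ _ (by rw [mul_zero, zero_mul])
  have hF : Function.Bijective f := by
    constructor
    · intro a b h
      have : s * (a - b) = 0 := by rw [mul_sub, hspec a, hspec b, h, sub_self]
      exact sub_eq_zero.mp (hregl _ this)
    · intro b
      obtain ⟨c, hc⟩ := hAs b
      exact ⟨c, huniq _ _ hc.symm⟩
  refine ⟨RingEquiv.ofBijective
    ({ toFun := f, map_one' := hone, map_mul' := hmul, map_zero' := hzero, map_add' := hadd } :
      A →+* A) hF, ?_⟩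
  exact hspec

variable {s : A} {e : A ≃+* A}

/-- iterates of the twisting automorphism -/
private noncomputable def epow (e : A ≃+* A) : ℕ → (A ≃+* A)
  | 0 => RingEquiv.refl A
  | n + 1 => (epow e n).trans e

private lemma epow_zero (a : A) : epow e 0 a = a := rfl

private lemma epow_succ (n : ℕ) (a : A) : epow e (n + 1) a = e (epow e n a) := rfl

private lemma e_s (he : ∀ a, s * a = e a * s)
    (hregr : ∀ a : A, a * s = 0 → a = 0) : e s = s := by
  have h2 : (e s - s) * s = 0 := by rw [sub_mul, ← he s, sub_self]
  exact sub_eq_zero.mp (hregr _ h2)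

private lemma epow_s (hes : e s = s) (n : ℕ) : epow e n s = s := by
  induction n with
  | zero => rfl
  | succ n ih => rw [epow_succ, ih, hes]

private lemma epow_spec (he : ∀ a, s * a = e a * s) (n : ℕ) (a : A) :
    s ^ n * a = epow e n a * s ^ n := by
  induction n with
  | zero => simp [epow_zero]
  | succ n ih =>
    rw [pow_succ', mul_assoc, ih, ← mul_assoc, he, epow_succ, mul_assoc, ← pow_succ']

private lemma epow_add (p q : ℕ) (a : A) : epow e (p + q) a = epow e p (epow e q a) := by
  induction p with
  | zero => rw [Nat.zero_add]; rfl
  | succ p ih =>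
    have h : p + 1 + q = (p + q) + 1 := by omega
    rw [h, epow_succ, ih, epow_succ]

private lemma epow_symm_succ (n : ℕ) (u : A) :
    (epow e (n + 1)).symm (e u) = (epow e n).symm u := by
  apply (epow e (n + 1)).injective
  rw [RingEquiv.apply_symm_apply, epow_succ, RingEquiv.apply_symm_apply]

private lemma epow_apply_symm (p N : ℕ) (h : N ≤ p) (u : A) :
    epow e p ((epow e N).symm u) = epow e (p - N) u := by
  conv_lhs => rw [show p = (p - N) + N from (Nat.sub_add_cancel h).symm]
  rw [epow_add, RingEquiv.apply_symm_apply]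


section Mods

variable {A : Type*} [Ring A] {B : Type*} [Ring B]

/-- leading coefficients of order-`n` elements of `I` -/
private def LL (I : Submodule A A) (s : A) (n : ℕ) : Submodule A A where
  carrier := {a | ∃ x ∈ I, ∃ b, x - a * s ^ n = b * s ^ (n + 1)}
  zero_mem' := ⟨0, I.zero_mem, 0, by simp⟩
  add_mem' := by
    rintro a a' ⟨x, hx, b, hb⟩ ⟨x', hx', b', hb'⟩
    refine ⟨x + x', I.add_mem hx hx', b + b', ?_⟩
    rw [add_mul, add_mul]
    rw [show x + x' - (a * s ^ n + a' * s ^ n) = (x - a * s ^ n) + (x' - a' * s ^ n) by abel,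
      hb, hb']
  smul_mem' := by
    rintro c a ⟨x, hx, b, hb⟩
    refine ⟨c • x, I.smul_mem c hx, c * b, ?_⟩
    rw [smul_eq_mul, smul_eq_mul, mul_assoc, mul_assoc, ← mul_sub, hb, ← mul_assoc]

private lemma LL_mem_of (I : Submodule A A) (s : A) (n : ℕ) {d : A}
    (h : d * s ^ n ∈ I) : d ∈ LL I s n :=
  ⟨d * s ^ n, h, 0, by simp⟩

private def PP (I : Submodule A A) (s : A) (π : A →+* B) (hπ : Function.Surjective π)
    (n : ℕ) : Submodule B B where
  carrier := π '' (LL I s n)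
  zero_mem' := ⟨0, (LL I s n).zero_mem, map_zero π⟩
  add_mem' := by
    rintro x y ⟨u, hu, rfl⟩ ⟨v, hv, rfl⟩
    exact ⟨u + v, add_mem hu hv, map_add π u v⟩
  smul_mem' := by
    rintro c x ⟨u, hu, rfl⟩
    obtain ⟨cc, rfl⟩ := hπ c
    exact ⟨cc * u, (LL I s n).smul_mem cc hu, map_mul π cc u⟩

private def JJ (I : Submodule A A) (s : A) (π : A →+* B) (hπ : Function.Surjective π)
    (e : A ≃+* A) (n : ℕ) : Submodule B B where
  carrier := π '' ((epow e n).symm '' (LL I s n))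
  zero_mem' := ⟨0, ⟨0, (LL I s n).zero_mem, map_zero _⟩, map_zero π⟩
  add_mem' := by
    rintro x y ⟨u, ⟨w, hw, rfl⟩, rfl⟩ ⟨v, ⟨w', hw', rfl⟩, rfl⟩
    exact ⟨_, ⟨w + w', add_mem hw hw', map_add _ w w'⟩, map_add π _ _⟩
  smul_mem' := by
    rintro c x ⟨u, ⟨w, hw, rfl⟩, rfl⟩
    obtain ⟨cc, rfl⟩ := hπ c
    refine ⟨cc * (epow e n).symm w, ⟨(epow e n cc) * w,
      (LL I s n).smul_mem _ hw, ?_⟩, map_mul π _ _⟩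
    rw [map_mul, RingEquiv.symm_apply_apply]


variable {s : A} {e : A ≃+* A} {I : Submodule A A} {π : A →+* B} {hπ : Function.Surjective π}

private lemma sg_LL (he : ∀ a, s * a = e a * s) {n : ℕ} {a : A} (ha : a ∈ LL I s n) :
    e a ∈ LL I s (n + 1) := by
  obtain ⟨x, hx, b, hb⟩ := ha
  refine ⟨s • x, I.smul_mem s hx, e b, ?_⟩
  have h1 : e a * s ^ (n + 1) = s * (a * s ^ n) := by
    rw [pow_succ', ← mul_assoc, ← he, mul_assoc]
  have h2 : e b * s ^ (n + 2) = s * (b * s ^ (n + 1)) := by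
    rw [pow_succ', ← mul_assoc, ← he, mul_assoc]
  rw [smul_eq_mul, h1, h2, ← mul_sub, hb]

private lemma JJ_mono (he : ∀ a, s * a = e a * s) (n : ℕ) :
    JJ I s π hπ e n ≤ JJ I s π hπ e (n + 1) := by
  rintro x ⟨u, ⟨w, hw, rfl⟩, rfl⟩
  exact ⟨_, ⟨e w, sg_LL he hw, epow_symm_succ n w⟩, rfl⟩

private lemma LL_stab (he : ∀ a, s * a = e a * s) (hes : e s = s)
    (hker : ∀ x : A, π x = 0 ↔ ∃ a : A, x = a * s) {N m : ℕ} (hNm : N ≤ m)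
    (hJ : JJ I s π hπ e m = JJ I s π hπ e N) {d : A} (hd : d ∈ LL I s m) :
    ∃ u ∈ LL I s N, ∃ g : A, d = epow e (m - N) u + g * s := by
  have h1 : π ((epow e m).symm d) ∈ JJ I s π hπ e m := ⟨_, ⟨d, hd, rfl⟩, rfl⟩
  rw [hJ] at h1
  obtain ⟨u', ⟨u, hu, rfl⟩, hπeq⟩ := h1
  have h0 : π ((epow e m).symm d - (epow e N).symm u) = 0 := by
    rw [map_sub, hπeq, sub_self]
  obtain ⟨g0, hg0⟩ := (hker _).mp h0
  refine ⟨u, hu, epow e m g0, ?_⟩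
  have h2 := congrArg (epow e m) hg0
  rw [map_sub, map_mul, RingEquiv.apply_symm_apply, epow_apply_symm _ _ hNm, epow_s hes] at h2
  rw [sub_eq_iff_eq_add.mp h2, add_comm]


private lemma exists_gens [IsNoetherianRing B] (I : Submodule A A) (s : A) (π : A →+* B)
    (hπ : Function.Surjective π) (n : ℕ) :
    ∃ (kk : ℕ) (aa : Fin kk → A), (∀ i, aa i ∈ LL I s n) ∧
      Submodule.span B (Set.range (fun i => π (aa i))) = PP I s π hπ n := by
  obtain ⟨kk, g, hg⟩ :=
    Submodule.fg_iff_exists_fin_generating_family.mp (IsNoetherian.noetherian (PP I s π hπ n))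
  have hmem : ∀ i, g i ∈ PP I s π hπ n := fun i => hg ▸ Submodule.subset_span ⟨i, rfl⟩
  choose aa haa hπaa using hmem
  refine ⟨kk, aa, haa, ?_⟩
  rw [show (fun i => π (aa i)) = g from funext hπaa, hg]


private lemma combo (hker : ∀ x : A, π x = 0 ↔ ∃ a : A, x = a * s) {n kk : ℕ}
    {aa : Fin kk → A}
    (hspan : Submodule.span B (Set.range (fun i => π (aa i))) = PP I s π hπ n)
    {d : A} (hd : d ∈ LL I s n) :
    ∃ (cβ : Fin kk → A) (g : A), d = (∑ i, cβ i * aa i) + g * s := by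
  have h1 : π d ∈ PP I s π hπ n := ⟨d, hd, rfl⟩
  rw [← hspan] at h1
  obtain ⟨β, hβ⟩ := Submodule.mem_span_range_iff_exists_fun B |>.mp h1
  refine ⟨fun i => Function.surjInv hπ (β i), ?_⟩
  have h2 : π (d - ∑ i, Function.surjInv hπ (β i) * aa i) = 0 := by
    rw [map_sub, map_sum]
    simp only [map_mul, Function.surjInv_eq hπ]
    simp only [smul_eq_mul] at hβ
    rw [hβ, sub_self]
  obtain ⟨g, hg⟩ := (hker _).mp h2
  exact ⟨g, by rw [← hg]; abel⟩

end Mods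

end Aux

/-- Let `k` be a field of characteristic zero, `A` a `k`-algebra and `s ∈ A` a regular
element with `sA = As`, such that `A` is separated and complete for the `s`-adic topology
(`A ≅ lim A/As^n`) and `A/As` is left Noetherian (realized here by a surjective ring
homomorphism `π : A → B` with kernel `As` onto a left Noetherian ring `B`).  Then `A` is
left Noetherian. -/
theorem noetherian_of_sAdically_complete
    {k : Type*} [Field k] [CharZero k]
    {A : Type*} [Ring A] [Algebra k A] (s : A)
    (hregl : ∀ a : A, s * a = 0 → a = 0)
    (hregr : ∀ a : A, a * s = 0 → a = 0)
    (hsA : ∀ a : A, ∃ b : A, s * a = b * s)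
    (hAs : ∀ a : A, ∃ b : A, a * s = s * b)
    (hsep : ∀ a : A, (∀ n : ℕ, ∃ b : A, a = b * s ^ n) → a = 0)
    (hcomplete : ∀ f : ℕ → A, (∀ n : ℕ, ∃ b : A, f (n + 1) - f n = b * s ^ n) →
      ∃ a : A, ∀ n : ℕ, ∃ b : A, a - f n = b * s ^ n)
    {B : Type*} [Ring B] (π : A →+* B) (hπ : Function.Surjective π)
    (hker : ∀ x : A, π x = 0 ↔ ∃ a : A, x = a * s)
    [IsNoetherianRing B] :
    IsNoetherianRing A := by
  classical
  obtain ⟨e, he⟩ := exists_sgEquiv s hsA hregr hregl hAs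
  have hes : e s = s := e_s he hregr
  rw [isNoetherianRing_iff, isNoetherian_def]
  intro I
  -- stabilization of the twisted symbol ideals
  obtain ⟨N, hN⟩ := (monotone_stabilizes_iff_noetherian.mpr inferInstance)
    ⟨fun n => JJ I s π hπ e n, monotone_nat_of_le_succ (fun n => JJ_mono he n)⟩
  -- generators of the symbol ideals in degrees ≤ N
  obtain ⟨kk, aa, haa, hspan⟩ :
      ∃ (kk : Fin (N + 1) → ℕ) (aa : ∀ n : Fin (N + 1), Fin (kk n) → A),
        (∀ (n : Fin (N + 1)) (i : Fin (kk n)), aa n i ∈ LL I s (n : ℕ)) ∧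
        (∀ n, Submodule.span B (Set.range (fun i => π (aa n i)))
          = PP I s π hπ (n : ℕ)) := by
    choose kk aa haa hspan using fun n : Fin (N + 1) => exists_gens I s π hπ (n : ℕ)
    exact ⟨kk, aa, haa, hspan⟩
  have haa' : ∀ (n : Fin (N + 1)) (i : Fin (kk n)), ∃ x, x ∈ I ∧
      ∃ b, x - aa n i * s ^ (n : ℕ) = b * s ^ ((n : ℕ) + 1) := fun n i => haa n i
  choose X hXI hXb using haa'
  choose bb hbb using hXb
  have hX' : ∀ (n : Fin (N + 1)) (i : Fin (kk n)),
      X n i = aa n i * s ^ (n : ℕ) + bb n i * s ^ ((n : ℕ) + 1) := by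
    intro n i
    have h := hbb n i
    rw [sub_eq_iff_eq_add] at h
    rw [h, add_comm]
  -- the finite generating family
  set ι := (n : Fin (N + 1)) × Fin (kk n) with hι
  set XX : ι → A := fun j => X j.1 j.2 with hXX
  have hXdvd : ∀ j : ι, ∃ b, XX j = b * s ^ ((j.1 : ℕ)) := by
    intro j
    refine ⟨aa j.1 j.2 + bb j.1 j.2 * s, ?_⟩
    show X j.1 j.2 = _
    rw [hX' j.1 j.2, add_mul, mul_assoc, ← pow_succ']
  -- the one-step approximation lemma
  have key : ∀ (m : ℕ) (w : A), w ∈ I → (∃ d, w = d * s ^ m) →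
      ∃ c : ι → A, (∀ j : ι, ∃ d, c j = d * s ^ (m - (j.1 : ℕ))) ∧
        (∀ j : ι, m < (j.1 : ℕ) → c j = 0) ∧
        (∃ d, w - ∑ j, c j * XX j = d * s ^ (m + 1)) := by
    intro m w hwI hdvd
    obtain ⟨d, rfl⟩ := hdvd
    have hdL : d ∈ LL I s m := LL_mem_of I s m hwI
    by_cases hm : m ≤ N
    · set n : Fin (N + 1) := ⟨m, by omega⟩ with hn
      obtain ⟨cβ, g, hcg⟩ := combo hker (hspan n) (show d ∈ LL I s (n : ℕ) from hdL)
      set c : ι → A := fun j =>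
        if h : j.1 = n then cβ ⟨j.2.val, by rw [← h]; exact j.2.isLt⟩ else 0 with hc
      have hsum : ∑ j, c j * XX j = ∑ i : Fin (kk n), cβ i * X n i := by
        rw [← Finset.univ_sigma_univ, Finset.sum_sigma]
        rw [Finset.sum_eq_single n]
        · refine Finset.sum_congr rfl fun i _ => ?_
          simp [hc, hXX]
        · intro a _ ha
          apply Finset.sum_eq_zero
          intro i _
          simp [hc, dif_neg ha]
        · intro h; exact absurd (Finset.mem_univ n) h
      refine ⟨c, ?_, ?_, ?_⟩
      · intro j
        by_cases h : j.1 = n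
        · refine ⟨c j, ?_⟩
          have : m - (j.1 : ℕ) = 0 := by rw [h]; simp [hn]
          rw [this, pow_zero, mul_one]
        · exact ⟨0, by simp [hc, dif_neg h]⟩
      · intro j hj
        have h : j.1 ≠ n := by
          intro h
          rw [h] at hj
          simp [hn] at hj
        simp [hc, dif_neg h]
      · have hXsum : ∑ i : Fin (kk n), cβ i * X n i =
            (∑ i, cβ i * aa n i) * s ^ m + (∑ i, cβ i * bb n i) * s ^ (m + 1) := by
          rw [Finset.sum_mul, Finset.sum_mul, ← Finset.sum_add_distrib]
          refine Finset.sum_congr rfl fun i _ => ?_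
          rw [hX' n i, mul_add, mul_assoc, mul_assoc]
        refine ⟨g - ∑ i, cβ i * bb n i, ?_⟩
        rw [hsum, hXsum, hcg, add_mul, sub_mul, mul_assoc, ← pow_succ']
        abel
    · -- m > N : use the stabilized level N
      have hJm : JJ I s π hπ e m = JJ I s π hπ e N := (hN m (by omega)).symm
      obtain ⟨u, hu, g, hdu⟩ := LL_stab he hes hker (by omega) hJm hdL
      set n : Fin (N + 1) := ⟨N, by omega⟩ with hn
      obtain ⟨cβ, g', hcg⟩ := combo hker (hspan n) (show u ∈ LL I s (n : ℕ) from hu)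
      set p := m - N with hp
      set c : ι → A := fun j =>
        if h : j.1 = n then epow e p (cβ ⟨j.2.val, by rw [← h]; exact j.2.isLt⟩) * s ^ p
        else 0 with hc
      have hsum : ∑ j, c j * XX j = ∑ i : Fin (kk n), epow e p (cβ i) * s ^ p * X n i := by
        rw [← Finset.univ_sigma_univ, Finset.sum_sigma]
        rw [Finset.sum_eq_single n]
        · refine Finset.sum_congr rfl fun i _ => ?_
          simp [hc, hXX]
        · intro a _ ha
          apply Finset.sum_eq_zero
          intro i _
          simp [hc, dif_neg ha]
        · intro h; exact absurd (Finset.mem_univ n) h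
      refine ⟨c, ?_, ?_, ?_⟩
      · intro j
        by_cases h : j.1 = n
        · refine ⟨epow e p (cβ ⟨j.2.val, by rw [← h]; exact j.2.isLt⟩), ?_⟩
          have hmj : m - (j.1 : ℕ) = p := by rw [h]
          rw [hmj]
          simp [hc, dif_pos h]
        · exact ⟨0, by simp [hc, dif_neg h]⟩
      · intro j hj
        have := j.1.isLt
        omega
      · have hsX : ∀ i : Fin (kk n), s ^ p * X n i =
            epow e p (aa n i) * s ^ m + epow e p (bb n i) * s ^ (m + 1) := by
          intro i
          have hmul : ∀ (x : A) (q : ℕ), s ^ p * (x * s ^ q) = epow e p x * s ^ (p + q) := by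
            intro x q
            rw [← mul_assoc, epow_spec he, mul_assoc, ← pow_add]
          have h1 : p + (n : ℕ) = m := by
            simp only [hn, hp, Fin.val_mk]
            omega
          have h2 : p + ((n : ℕ) + 1) = m + 1 := by
            simp only [hn, hp, Fin.val_mk]
            omega
          rw [hX' n i, mul_add, hmul, hmul, h1, h2]
        have hXsum : ∑ i : Fin (kk n), epow e p (cβ i) * s ^ p * X n i =
            epow e p (∑ i, cβ i * aa n i) * s ^ m +
              epow e p (∑ i, cβ i * bb n i) * s ^ (m + 1) := by
          rw [map_sum, map_sum, Finset.sum_mul, Finset.sum_mul, ← Finset.sum_add_distrib]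
          refine Finset.sum_congr rfl fun i _ => ?_
          rw [mul_assoc, hsX i, mul_add, ← mul_assoc, ← mul_assoc, ← map_mul, ← map_mul]
        refine ⟨epow e p g' + g - epow e p (∑ i, cβ i * bb n i), ?_⟩
        have hdm : d * s ^ m = epow e p (∑ i, cβ i * aa n i) * s ^ m +
            (epow e p g' + g) * s ^ (m + 1) := by
          rw [hdu, hcg, map_add, map_mul, epow_s hes, add_mul, add_mul, add_mul, mul_assoc,
            mul_assoc, ← pow_succ']
          abel
        rw [hsum, hXsum, hdm, sub_mul]
        abel
  -- totalized step function
  have key' : ∀ (m : ℕ) (w : A), ∃ c : ι → A,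
      (w ∈ I → (∃ d, w = d * s ^ m) →
        (∀ j : ι, ∃ d, c j = d * s ^ (m - (j.1 : ℕ))) ∧
        (∀ j : ι, m < (j.1 : ℕ) → c j = 0) ∧
        (∃ d, w - ∑ j, c j * XX j = d * s ^ (m + 1))) := by
    intro m w
    by_cases h : w ∈ I ∧ ∃ d, w = d * s ^ m
    · obtain ⟨c, hc⟩ := key m w h.1 h.2
      exact ⟨c, fun _ _ => hc⟩
    · exact ⟨0, fun h1 h2 => absurd ⟨h1, h2⟩ h⟩
  choose cf hcf using key'
  -- every element of I lies in the span of the family XX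
  have main : ∀ y ∈ I, y ∈ Submodule.span A (Set.range XX) := by
    intro y hy
    obtain ⟨W, hW0, hWsucc⟩ : ∃ W : ℕ → A, W 0 = y ∧
        ∀ m, W (m + 1) = W m - ∑ j, cf m (W m) j * XX j :=
      ⟨fun m => Nat.rec y (fun m w => w - ∑ j, cf m w j * XX j) m, rfl, fun m => rfl⟩
    have hWI : ∀ m, W m ∈ I ∧ ∃ d, W m = d * s ^ m := by
      intro m
      induction m with
      | zero => exact ⟨by rw [hW0]; exact hy, ⟨y, by rw [hW0]; simp⟩⟩
      | succ m ih =>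
        obtain ⟨h1, h2, h3⟩ := hcf m (W m) ih.1 ih.2
        refine ⟨?_, ?_⟩
        · rw [hWsucc]
          exact Submodule.sub_mem I ih.1 (Submodule.sum_mem I fun j _ =>
            I.smul_mem (cf m (W m) j) (hXI j.1 j.2))
        · rw [hWsucc]; exact h3
    obtain ⟨C, hCdef⟩ : ∃ C : ℕ → ι → A, ∀ m, C m = cf m (W m) := ⟨_, fun m => rfl⟩
    have hC1 : ∀ m j, ∃ d, C m j = d * s ^ (m - (j.1 : ℕ)) :=
      fun m => hCdef m ▸ (hcf m (W m) (hWI m).1 (hWI m).2).1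
    have hC2 : ∀ m j, m < (j.1 : ℕ) → C m j = 0 :=
      fun m => hCdef m ▸ (hcf m (W m) (hWI m).1 (hWI m).2).2.1
    obtain ⟨P, hPdef⟩ : ∃ P : ℕ → ι → A, ∀ m j, P m j = ∑ t ∈ Finset.range m, C t j :=
      ⟨_, fun m j => rfl⟩
    have hWP : ∀ m, y - ∑ j, P m j * XX j = W m := by
      intro m
      induction m with
      | zero =>
        have h0 : ∀ j : ι, P 0 j = 0 := fun j => by rw [hPdef]; simp
        rw [Finset.sum_congr rfl fun j _ => by rw [h0 j, zero_mul], hW0]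
        simp
      | succ m ih =>
        rw [hWsucc, ← hCdef m, ← ih]
        have hPs : ∀ j : ι, P (m + 1) j * XX j = P m j * XX j + C m j * XX j := by
          intro j
          rw [hPdef, hPdef, Finset.sum_range_succ, add_mul]
        rw [Finset.sum_congr rfl (fun j _ => hPs j), Finset.sum_add_distrib]
        abel
    -- limits of the coefficient partial sums
    have hlim : ∀ j : ι, ∃ Cinf : A, ∀ q : ℕ, ∃ b, Cinf - P ((j.1 : ℕ) + q) j = b * s ^ q := by
      intro j
      refine hcomplete (fun q => P ((j.1 : ℕ) + q) j) ?_
      intro q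
      obtain ⟨d, hd⟩ := hC1 ((j.1 : ℕ) + q) j
      rw [show ((j.1 : ℕ) + q) - (j.1 : ℕ) = q from by omega] at hd
      refine ⟨d, ?_⟩
      show P ((j.1 : ℕ) + (q + 1)) j - P ((j.1 : ℕ) + q) j = d * s ^ q
      rw [show (j.1 : ℕ) + (q + 1) = ((j.1 : ℕ) + q) + 1 from by omega,
        hPdef, hPdef, Finset.sum_range_succ, add_sub_cancel_left]
      exact hd
    choose Cinf hCinf using hlim
    have hfinal : y - ∑ j, Cinf j * XX j = 0 := by
      apply hsep
      intro m
      have hsplit : y - ∑ j, Cinf j * XX j = W m + ∑ j, (P m j - Cinf j) * XX j := by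
        rw [← hWP m,
          Finset.sum_congr rfl (fun j _ => sub_mul (P m j) (Cinf j) (XX j)),
          Finset.sum_sub_distrib]
        abel
      obtain ⟨d, hd⟩ := (hWI m).2
      have hterm : ∀ j : ι, ∃ b, (P m j - Cinf j) * XX j = b * s ^ m := by
        intro j
        obtain ⟨x0, hx0⟩ := hXdvd j
        by_cases hj : (j.1 : ℕ) ≤ m
        · obtain ⟨b, hb⟩ := hCinf j (m - (j.1 : ℕ))
          rw [show (j.1 : ℕ) + (m - (j.1 : ℕ)) = m from by omega] at hb
          have hmul2 : s ^ (m - (j.1 : ℕ)) * (x0 * s ^ ((j.1 : ℕ)))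
              = epow e (m - (j.1 : ℕ)) x0 * s ^ m := by
            rw [← mul_assoc, epow_spec he, mul_assoc, ← pow_add, Nat.sub_add_cancel hj]
          refine ⟨-b * epow e (m - (j.1 : ℕ)) x0, ?_⟩
          have hPC : P m j - Cinf j = -b * s ^ (m - (j.1 : ℕ)) := by
            rw [neg_mul, ← hb, neg_sub]
          rw [hPC, hx0, mul_assoc, hmul2, ← mul_assoc]
        · have hP0 : P m j = 0 := by
            rw [hPdef]
            apply Finset.sum_eq_zero
            intro t ht
            exact hC2 t j (by have := Finset.mem_range.mp ht; omega)
          have hpow : s ^ ((j.1 : ℕ)) = s ^ ((j.1 : ℕ) - m) * s ^ m := by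
            rw [← pow_add]
            congr 1
            omega
          refine ⟨-(Cinf j) * (x0 * s ^ ((j.1 : ℕ) - m)), ?_⟩
          rw [hP0, zero_sub, hx0, hpow, ← mul_assoc x0, ← mul_assoc, neg_mul, neg_mul]
      choose bf hbf using hterm
      refine ⟨d + ∑ j, bf j, ?_⟩
      rw [hsplit, hd, Finset.sum_congr rfl (fun j _ => hbf j), ← Finset.sum_mul, ← add_mul]
    have hy' : y = ∑ j, Cinf j * XX j := by
      have := sub_eq_zero.mp hfinal
      exact this
    rw [hy']
    exact Submodule.sum_mem _ fun j _ =>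
      Submodule.smul_mem _ _ (Submodule.subset_span ⟨j, rfl⟩)
  have hIeq : I = Submodule.span A (Set.range XX) := by
    apply le_antisymm
    · exact main
    · rw [Submodule.span_le]
      rintro _ ⟨j, rfl⟩
      exact hXI j.1 j.2
  rw [hIeq]
  exact Submodule.fg_span (Set.finite_range XX)
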